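/- Let L be a real symmetric N×N matrix with pairwise distinct eigenvalues −(ω^{(j)})², where ω^{(j)} > 0, and corresponding nonzero orthogonal eigenvectors u^{(j)}, 1 ≤ j ≤ N. Assume that for every integer k ≥ 2 and every j one has (ω^{(j)})² ≠ k²(ω^{(1)})². Set Q₀(τ) = (u^{(1)}/‖u^{(1)}‖)·2cos τ. Suppose ω₂ ∈ ℝ and Q₂(τ) = Σ_{j=1}^{N} Σ_{k≥1} c_{k,j} (u^{(j)}/‖u^{(j)}‖)·2cos(kτ) (with only finitely many nonzero coefficients and with c_{1,1} = 0) satisfies (ω^{(1)})² Q̈₂(τ) + 2ω^{(1)}ω₂ Q̈₀(τ) = L Q₂(τ) + Q₀(τ)∘Q₀(τ)∘Q₀(τ) for all τ. Then c_{1,j} = 3⟨(u^{(1)})^{∘3}, u^{(j)}⟩ / (‖u^{(1)}‖³ ‖u^{(j)}‖ ((ω^{(j)})² − (ω^{(1)})²)) for every j ≠ 1, c_{3,j} = ⟨(u^{(1)})^{∘3}, u^{(j)}⟩ / (‖u^{(1)}‖³ ‖u^{(j)}‖ ((ω^{(j)})² − 9(ω^{(1)})²)) for every j, and c_{k,j}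 = 0 whenever k ∉ {1, 3}. -/

import Mathlib

/-- Euclidean norm on `Fin N → ℝ`. -/
noncomputable def enormFin {N : ℕ} (v : Fin N → ℝ) : ℝ := Real.sqrt (∑ l, (v l)^2)

/-- The leading mode of the expansion: `Q₀(τ) = (u₁/‖u₁‖)·2cos τ`. -/
noncomputable def Qzero {N : ℕ} (u1 : Fin N → ℝ) (τ : ℝ) : Fin N → ℝ :=
  ((2 * Real.cos τ) / enormFin u1) • u1

/-- The first correction term, expanded in the eigenbasis and temporal harmonics:
`Q₂(τ) = Σ_j Σ_k c_{k,j} (u_j/‖u_j‖)·2cos(kτ)`. -/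
noncomputable def Qtwo {N : ℕ} (u : Fin N → Fin N → ℝ) (c : ℕ → Fin N → ℝ)
    (τ : ℝ) : Fin N → ℝ :=
  ∑ j, ∑ᶠ k : ℕ, ((c k j * (2 * Real.cos ((k : ℝ) * τ))) / enormFin (u j)) • u j

open Real

/- ## integral aux lemmas -/

lemma aux_int_cos (n : ℤ) (hn : n ≠ 0) :
    ∫ τ in (0:ℝ)..(2*π), Real.cos (n * τ) = 0 := by
  rw [intervalIntegral.integral_comp_mul_left (fun x => Real.cos x) (c := (n:ℝ)) (by exact_mod_cast hn)]
  simp only [mul_zero, integral_cos, Real.sin_zero, sub_zero]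
  rw [show (n:ℝ) * (2*π) = (2*n : ℤ) * π by push_cast; ring, Real.sin_int_mul_pi]
  simp

lemma aux_cos_mul_cos (x y : ℝ) :
    Real.cos x * Real.cos y = (Real.cos (x+y) + Real.cos (x-y)) / 2 := by
  rw [Real.cos_add, Real.cos_sub]; ring

lemma aux_int_cc (k m : ℕ) (hm : m ≠ 0) :
    ∫ τ in (0:ℝ)..(2*π), Real.cos (k*τ) * Real.cos (m*τ)
      = if k = m then π else 0 := by
  have h1 : ∀ τ : ℝ, Real.cos (k*τ) * Real.cos (m*τ)
      = (Real.cos (((k+m:ℤ))*τ) + Real.cos (((k-m:ℤ))*τ)) / 2 := by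
    intro τ
    rw [aux_cos_mul_cos]
    push_cast
    ring_nf
  rw [intervalIntegral.integral_congr (g := fun τ => (Real.cos (((k+m:ℤ))*τ) + Real.cos (((k-m:ℤ))*τ)) / 2) (fun τ _ => h1 τ)]
  have hint : ∀ n : ℤ, IntervalIntegrable (fun τ => Real.cos ((n:ℝ)*τ)) MeasureTheory.volume 0 (2*π) :=
    fun n => (Real.continuous_cos.comp (continuous_const.mul continuous_id)).intervalIntegrable _ _
  simp only [intervalIntegral.integral_div, intervalIntegral.integral_add (hint _) (hint _)]
  rw [aux_int_cos (k+m : ℤ) (by omega)]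
  by_cases hkm : k = m
  · subst hkm
    simp only [sub_self, Int.cast_zero, zero_mul, Real.cos_zero, if_pos rfl]
    rw [intervalIntegral.integral_const]
    simp
  · rw [aux_int_cos (k-m : ℤ) (by omega), if_neg hkm]; ring

lemma aux_cos_indep (K : Finset ℕ) (a : ℕ → ℝ)
    (h : ∀ τ : ℝ, ∑ k ∈ K, a k * Real.cos (k * τ) = 0) :
    ∀ m ∈ K, m ≠ 0 → a m = 0 := by
  intro m hm hm0
  have hint : ∀ k : ℕ, IntervalIntegrable
      (fun τ => a k * Real.cos ((k:ℝ)*τ) * Real.cos ((m:ℝ)*τ)) MeasureTheory.volume 0 (2*π) := by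
    intro k
    exact (((continuous_const.mul (Real.continuous_cos.comp (continuous_const.mul continuous_id))).mul
      (Real.continuous_cos.comp (continuous_const.mul continuous_id)))).intervalIntegrable _ _
  have key : ∫ τ in (0:ℝ)..(2*π), ∑ k ∈ K, a k * Real.cos ((k:ℝ)*τ) * Real.cos ((m:ℝ)*τ) = 0 := by
    rw [intervalIntegral.integral_congr (g := fun _ => (0:ℝ))]
    · simp
    · intro τ _
      simp only
      rw [← Finset.sum_mul, h τ, zero_mul]
  rw [intervalIntegral.integral_finset_sum (fun k _ => hint k)] at key
  have : ∀ k ∈ K, (∫ τ in (0:ℝ)..(2*π), a k * Real.cos ((k:ℝ)*τ) * Real.cos ((m:ℝ)*τ))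
      = if k = m then a k * π else 0 := by
    intro k _
    rw [show (fun τ => a k * Real.cos ((k:ℝ)*τ) * Real.cos ((m:ℝ)*τ))
        = (fun τ => a k * (Real.cos ((k:ℝ)*τ) * Real.cos ((m:ℝ)*τ))) by funext τ; ring]
    rw [intervalIntegral.integral_const_mul, aux_int_cc k m hm0]
    split <;> simp
  rw [Finset.sum_congr rfl this, Finset.sum_ite_eq' K m (fun k => a k * π), if_pos hm] at key
  rcases mul_eq_zero.mp key with h' | h'
  · exact h'
  · exact absurd h' Real.pi_ne_zero

/- ## linear algebra aux lemmas -/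

lemma enorm_sq {N : ℕ} (v : Fin N → ℝ) : (enormFin v)^2 = ∑ l, (v l)^2 :=
  Real.sq_sqrt (Finset.sum_nonneg fun _ _ => sq_nonneg _)

lemma enormFin_pos {N : ℕ} (v : Fin N → ℝ) (hv : v ≠ 0) : 0 < enormFin v := by
  apply Real.sqrt_pos.mpr
  have : ∃ l, v l ≠ 0 := by
    by_contra h
    push_neg at h
    exact hv (funext h)
  obtain ⟨l, hl⟩ := this
  exact Finset.sum_pos' (fun i _ => sq_nonneg _) ⟨l, Finset.mem_univ l, by positivity⟩

lemma dot_self_eq {N : ℕ} (v : Fin N → ℝ) : ∑ l, v l * v l = (enormFin v)^2 := by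
  rw [enorm_sq]; exact Finset.sum_congr rfl fun l _ => (sq (v l)).symm

lemma dot_proj {N : ℕ} (u : Fin N → Fin N → ℝ)
    (horthog : ∀ i j : Fin N, i ≠ j → ∑ l, u i l * u j l = 0)
    (j0 : Fin N) (s : Fin N → ℝ) :
    ∑ l, (∑ j, s j • u j) l * u j0 l = s j0 * (enormFin (u j0))^2 := by
  have h1 : ∀ l, (∑ j, s j • u j) l = ∑ j, s j * u j l := by
    intro l; rw [Finset.sum_apply]; rfl
  simp only [h1, Finset.sum_mul]
  rw [Finset.sum_comm]
  rw [Finset.sum_eq_single j0]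
  · rw [← dot_self_eq, Finset.mul_sum]
    exact Finset.sum_congr rfl fun l _ => by ring
  · intro j _ hj
    calc ∑ x, s j * u j x * u j0 x = s j * ∑ x, u j x * u j0 x := by
          rw [Finset.mul_sum]; exact Finset.sum_congr rfl fun l _ => by ring
      _ = 0 := by rw [horthog j j0 hj, mul_zero]
  · intro h; exact absurd (Finset.mem_univ j0) h

lemma dot_add {N : ℕ} (x y w : Fin N → ℝ) :
    ∑ l, (x + y) l * w l = (∑ l, x l * w l) + ∑ l, y l * w l := by
  simp [Pi.add_apply, add_mul, Finset.sum_add_distrib]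

lemma dot_smul {N : ℕ} (r : ℝ) (x w : Fin N → ℝ) :
    ∑ l, (r • x) l * w l = r * ∑ l, x l * w l := by
  simp only [Pi.smul_apply, smul_eq_mul, Finset.mul_sum, mul_assoc]

lemma dot_modes {N : ℕ} (u : Fin N → Fin N → ℝ)
    (horthog : ∀ i j : Fin N, i ≠ j → ∑ l, u i l * u j l = 0)
    (hune : ∀ j, u j ≠ 0)
    (j0 : Fin N) (K : Finset ℕ) (f : ℕ → Fin N → ℝ) :
    ∑ l, (∑ j, ∑ k ∈ K, (f k j / enormFin (u j)) • u j) l * u j0 l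
      = (∑ k ∈ K, f k j0) * enormFin (u j0) := by
  have h1 : (∑ j, ∑ k ∈ K, (f k j / enormFin (u j)) • u j)
      = ∑ j, ((∑ k ∈ K, f k j) / enormFin (u j)) • u j := by
    apply Finset.sum_congr rfl
    intro j _
    rw [Finset.sum_div, Finset.sum_smul]
  rw [h1, dot_proj u horthog j0]
  have hA := enormFin_pos (u j0) (hune j0)
  field_simp

/-- Explicit coefficients of the first correction `Q₂` in the formal expansion
`Q = ε Q₀ + ε³ Q₂ + ⋯`, `ω = ω⁽¹⁾ + ε² ω₂ + ⋯` of time-periodic solutions of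
`ω² Q″ = L Q + Q∘Q∘Q` around the first linear mode `u⁽¹⁾` of a symmetric matrix `L`
with simple, non-resonant spectrum. -/
theorem stmt14 (N : ℕ) (hN : 0 < N) (L : Matrix (Fin N) (Fin N) ℝ) (hL : L.IsSymm)
    (ω : Fin N → ℝ) (hωpos : ∀ j, 0 < ω j)
    (hdist : ∀ i j : Fin N, i ≠ j → (ω i)^2 ≠ (ω j)^2)
    (u : Fin N → Fin N → ℝ) (hune : ∀ j, u j ≠ 0)
    (horthog : ∀ i j : Fin N, i ≠ j → ∑ l, u i l * u j l = 0)
    (heig : ∀ j, L.mulVec (u j) = (-(ω j)^2) • u j)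
    (i1 : Fin N) (hi1 : i1 = ⟨0, hN⟩)
    (hres : ∀ k : ℕ, 2 ≤ k → ∀ j, (ω j)^2 ≠ (k : ℝ)^2 * (ω i1)^2)
    (ω2 : ℝ) (c : ℕ → Fin N → ℝ)
    (hcfin : ∀ j, (Function.support fun k => c k j).Finite)
    (hc0 : ∀ j, c 0 j = 0) (hc11 : c 1 i1 = 0)
    (heq : ∀ τ : ℝ,
      ((ω i1)^2) • deriv (deriv (Qtwo u c)) τ +
          (2 * ω i1 * ω2) • deriv (deriv (Qzero (u i1))) τ
        = L.mulVec (Qtwo u c τ) + fun l => (Qzero (u i1) τ l)^3) :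
    (∀ j, j ≠ i1 →
      c 1 j = 3 * (∑ l, (u i1 l)^3 * u j l) /
        ((enormFin (u i1))^3 * enormFin (u j) * ((ω j)^2 - (ω i1)^2))) ∧
    (∀ j, c 3 j = (∑ l, (u i1 l)^3 * u j l) /
        ((enormFin (u i1))^3 * enormFin (u j) * ((ω j)^2 - 9*(ω i1)^2))) ∧
    (∀ (k : ℕ) (j : Fin N), k ≠ 1 → k ≠ 3 → c k j = 0) := by
  classical
  set B : ℝ := enormFin (u i1) with hBdef
  have hB : 0 < B := enormFin_pos _ (hune i1)
  set K : Finset ℕ := Finset.univ.biUnion (fun j => (hcfin j).toFinset) with hKdef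
  have hKc : ∀ (k : ℕ) (j : Fin N), k ∉ K → c k j = 0 := by
    intro k j hk
    by_contra h
    exact hk (Finset.mem_biUnion.mpr ⟨j, Finset.mem_univ j,
      (hcfin j).mem_toFinset.mpr h⟩)
  -- the three "levels" of Q₂
  set G0 : ℝ → Fin N → ℝ := fun τ => ∑ j, ∑ k ∈ K,
    ((c k j * (2 * Real.cos ((k:ℝ) * τ))) / enormFin (u j)) • u j with hG0def
  set G1 : ℝ → Fin N → ℝ := fun τ => ∑ j, ∑ k ∈ K,
    ((c k j * (2 * (-Real.sin ((k:ℝ) * τ) * (k:ℝ)))) / enormFin (u j)) • u j with hG1def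
  set G2 : ℝ → Fin N → ℝ := fun τ => ∑ j, ∑ k ∈ K,
    ((c k j * (2 * (-(Real.cos ((k:ℝ) * τ) * (k:ℝ)) * (k:ℝ)))) / enormFin (u j)) • u j with hG2def
  have hQG : Qtwo u c = G0 := by
    funext τ
    unfold Qtwo
    apply Finset.sum_congr rfl
    intro j _
    apply finsum_eq_sum_of_support_subset
    intro k hk
    simp only [Function.mem_support] at hk
    by_contra hkK
    apply hk
    rw [hKc k j (by simpa using hkK)]
    simp
  have hd1 : ∀ τ, HasDerivAt G0 (G1 τ) τ := by
    intro τ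
    apply HasDerivAt.fun_sum
    intro j _
    apply HasDerivAt.fun_sum
    intro k _
    have hk : HasDerivAt (fun τ : ℝ => (k:ℝ) * τ) (k:ℝ) τ := by
      simpa using (hasDerivAt_id τ).const_mul (k:ℝ)
    exact (((hk.cos.const_mul 2).const_mul (c k j)).div_const (enormFin (u j))).smul_const (u j)
  have hd2 : ∀ τ, HasDerivAt G1 (G2 τ) τ := by
    intro τ
    apply HasDerivAt.fun_sum
    intro j _
    apply HasDerivAt.fun_sum
    intro k _
    have hk : HasDerivAt (fun τ : ℝ => (k:ℝ) * τ) (k:ℝ) τ := by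
      simpa using (hasDerivAt_id τ).const_mul (k:ℝ)
    exact ((((hk.sin.neg.mul_const (k:ℝ)).const_mul 2).const_mul (c k j)).div_const
      (enormFin (u j))).smul_const (u j)
  have hQd2 : ∀ τ, deriv (deriv (Qtwo u c)) τ = G2 τ := by
    have h1 : deriv (Qtwo u c) = G1 := by
      funext τ
      rw [hQG]
      exact (hd1 τ).deriv
    intro τ
    rw [h1]
    exact (hd2 τ).deriv
  -- Qzero derivatives
  have hp1 : ∀ τ, HasDerivAt (Qzero (u i1)) (((2 * -Real.sin τ) / B) • u i1) τ := by
    intro τ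
    have h := (((Real.hasDerivAt_cos τ).const_mul 2).div_const B).smul_const (u i1)
    have h' : HasDerivAt (fun y => (2 * Real.cos y / B) • u i1) (((2 * -Real.sin τ) / B) • u i1) τ := by
      simpa using h
    exact h'
  have hp2 : ∀ τ, HasDerivAt (fun τ => ((2 * -Real.sin τ) / B) • u i1)
      (((2 * -Real.cos τ) / B) • u i1) τ := by
    intro τ
    exact (((Real.hasDerivAt_sin τ).neg.const_mul 2).div_const B).smul_const (u i1)
  have hPd2 : ∀ τ, deriv (deriv (Qzero (u i1))) τ = ((2 * -Real.cos τ) / B) • u i1 := by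
    have h1 : deriv (Qzero (u i1)) = fun τ => ((2 * -Real.sin τ) / B) • u i1 := by
      funext τ
      exact (hp1 τ).deriv
    intro τ
    rw [h1]
    exact (hp2 τ).deriv
  -- main coefficient identities
  have main : ∀ j0 : Fin N, ∀ m : ℕ, m ≠ 0 →
      c m j0 * 2 * enormFin (u j0) * ((ω j0)^2 - (m:ℝ)^2 * (ω i1)^2)
        + (if m = 1 then -(4 * ω i1 * ω2 * ((∑ l, u i1 l * u j0 l) / B))
             - 6 * (∑ l, (u i1 l)^3 * u j0 l) / B^3 else 0)
        + (if m = 3 then -(2 * (∑ l, (u i1 l)^3 * u j0 l)) / B^3 else 0) = 0 := by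
    intro j0
    set A : ℝ := enormFin (u j0) with hAdef
    have hA : 0 < A := enormFin_pos _ (hune j0)
    set S : ℝ := ∑ l, (u i1 l)^3 * u j0 l with hSdef
    set D : ℝ := ∑ l, u i1 l * u j0 l with hDdef
    set X : ℝ → ℝ := fun τ => ∑ k ∈ K, c k j0 * (2 * Real.cos ((k:ℝ) * τ)) with hXdef
    set Y : ℝ → ℝ := fun τ => ∑ k ∈ K,
      c k j0 * (2 * (-(Real.cos ((k:ℝ) * τ) * (k:ℝ)) * (k:ℝ))) with hYdef
    -- dot products of the four pieces
    have hdotG2 : ∀ τ, ∑ l, (G2 τ) l * u j0 l = Y τ * A :=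
      fun τ => dot_modes u horthog hune j0 K _
    have hdotL : ∀ τ, ∑ l, (L.mulVec (Qtwo u c τ)) l * u j0 l
        = -(ω j0)^2 * (X τ * A) := by
      intro τ
      rw [hQG]
      have h2 : L.mulVec (G0 τ)
          = ∑ j, (-(ω j)^2 * ((∑ k ∈ K, c k j * (2 * Real.cos ((k:ℝ) * τ))) / enormFin (u j))) • u j := by
        have h1 : G0 τ = ∑ j, ((∑ k ∈ K, c k j * (2 * Real.cos ((k:ℝ) * τ))) / enormFin (u j)) • u j := by
          rw [hG0def]
          apply Finset.sum_congr rfl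
          intro j _
          rw [Finset.sum_div, Finset.sum_smul]
        rw [h1, ← Matrix.mulVecLin_apply, map_sum]
        apply Finset.sum_congr rfl
        intro j _
        rw [map_smul, Matrix.mulVecLin_apply, heig j, smul_smul, mul_comm]
      rw [h2, dot_proj u horthog j0]
      rw [← hAdef]
      field_simp
      ring
      simp only [hXdef]
      congr 2
      exact Finset.sum_congr rfl fun k _ => by ring
    have hdotP : ∀ τ, ∑ l, (((2 * -Real.cos τ) / B) • u i1) l * u j0 l
        = (2 * -Real.cos τ) / B * D := by
      intro τ
      rw [dot_smul]
    have hdotC : ∀ τ, ∑ l, (Qzero (u i1) τ l)^3 * u j0 l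
        = (2 * Real.cos τ)^3 / B^3 * S := by
      intro τ
      rw [hSdef, Finset.mul_sum]
      apply Finset.sum_congr rfl
      intro l _
      simp only [Qzero, Pi.smul_apply, smul_eq_mul]
      rw [← hBdef]
      ring
    -- scalar equation
    have E : ∀ τ : ℝ, (ω i1)^2 * (Y τ * A) + (2 * ω i1 * ω2) * ((2 * -Real.cos τ) / B * D)
        = -(ω j0)^2 * (X τ * A) + (2 * Real.cos τ)^3 / B^3 * S := by
      intro τ
      have h := congrArg (fun v : Fin N → ℝ => ∑ l, v l * u j0 l) (heq τ)
      rw [hQd2 τ, hPd2 τ, dot_add, dot_add, dot_smul, dot_smul, hdotG2 τ, hdotP τ, hdotL τ] at h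
      rw [show ∑ l, (fun l => (Qzero (u i1) τ l)^3) l * u j0 l
          = ∑ l, (Qzero (u i1) τ l)^3 * u j0 l from rfl, hdotC τ] at h
      exact h
    -- Fourier coefficients
    set K' : Finset ℕ := insert 1 (insert 3 K) with hK'def
    set a : ℕ → ℝ := fun m =>
      c m j0 * 2 * A * ((ω j0)^2 - (m:ℝ)^2 * (ω i1)^2)
        + (if m = 1 then -(4 * ω i1 * ω2 * (D / B)) - 6 * S / B^3 else 0)
        + (if m = 3 then -(2 * S) / B^3 else 0) with hadef
    have hcube : ∀ τ : ℝ, (2 * Real.cos τ)^3 = 2 * Real.cos (3 * τ) + 6 * Real.cos τ := by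
      intro τ
      have h := Real.cos_three_mul τ
      linear_combination (-2) * h
    have key : ∀ τ : ℝ, ∑ k ∈ K', a k * Real.cos ((k:ℝ) * τ) = 0 := by
      intro τ
      have hsplit : ∑ k ∈ K', a k * Real.cos ((k:ℝ) * τ)
          = (∑ k ∈ K', (c k j0 * 2 * A * ((ω j0)^2 - (k:ℝ)^2 * (ω i1)^2)) * Real.cos ((k:ℝ) * τ))
            + (∑ k ∈ K', (if k = 1 then (-(4 * ω i1 * ω2 * (D / B)) - 6 * S / B^3) * Real.cos ((k:ℝ) * τ) else 0))
            + (∑ k ∈ K', (if k = 3 then (-(2 * S) / B^3) * Real.cos ((k:ℝ) * τ) else 0)) := by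
        rw [← Finset.sum_add_distrib, ← Finset.sum_add_distrib]
        apply Finset.sum_congr rfl
        intro k _
        rw [hadef]
        simp only
        split <;> split <;> ring
      rw [hsplit]
      rw [Finset.sum_ite_eq' K' 1, Finset.sum_ite_eq' K' 3,
        if_pos (Finset.mem_insert_self 1 _),
        if_pos (Finset.mem_insert_of_mem (Finset.mem_insert_self 3 K))]
      have hKsub : K ⊆ K' := fun x hx =>
        Finset.mem_insert_of_mem (Finset.mem_insert_of_mem hx)
      rw [← Finset.sum_subset hKsub (fun x _ hxK => by rw [hKc x j0 hxK]; ring)]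
      have hsplit2 : ∑ k ∈ K, (c k j0 * 2 * A * ((ω j0)^2 - (k:ℝ)^2 * (ω i1)^2)) * Real.cos ((k:ℝ) * τ)
          = (ω j0)^2 * A * X τ + (ω i1)^2 * A * Y τ := by
        rw [hXdef, hYdef]
        simp only
        rw [Finset.mul_sum, Finset.mul_sum, ← Finset.sum_add_distrib]
        apply Finset.sum_congr rfl
        intro k _
        ring
      rw [hsplit2]
      push_cast
      simp only [one_mul]
      linear_combination E τ + (S / B^3) * hcube τ
    intro m hm0
    by_cases hmK' : m ∈ K'
    · have := aux_cos_indep K' a key m hmK' hm0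
      rw [hadef] at this
      exact this
    · have hm1 : m ≠ 1 := fun h => hmK' (h ▸ Finset.mem_insert_self 1 _)
      have hm3 : m ≠ 3 := fun h =>
        hmK' (h ▸ Finset.mem_insert_of_mem (Finset.mem_insert_self 3 K))
      have hmK : m ∉ K := fun h =>
        hmK' (Finset.mem_insert_of_mem (Finset.mem_insert_of_mem h))
      rw [hKc m j0 hmK, if_neg hm1, if_neg hm3]
      ring
  -- extraction
  have hB3 : B^3 ≠ 0 := by positivity
  refine ⟨?_, ?_, ?_⟩
  · intro j hj
    have hA : 0 < enormFin (u j) := enormFin_pos _ (hune j)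
    have hD : ∑ l, u i1 l * u j l = 0 := horthog i1 j (Ne.symm hj)
    have h := main j 1 one_ne_zero
    rw [if_pos rfl, if_neg (by norm_num), hD] at h
    have hω : (ω j)^2 - (ω i1)^2 ≠ 0 := sub_ne_zero.mpr (hdist j i1 hj)
    field_simp at h ⊢
    push_cast at h
    linear_combination h / 2
  · intro j
    have hA : 0 < enormFin (u j) := enormFin_pos _ (hune j)
    have h := main j 3 (by norm_num)
    rw [if_neg (by norm_num), if_pos rfl] at h
    have hω : (ω j)^2 - 9 * (ω i1)^2 ≠ 0 := by
      have := hres 3 (by norm_num) j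
      intro hcon
      apply this
      push_cast
      linarith
    field_simp at h
    rw [eq_div_iff (mul_ne_zero (mul_ne_zero hB3 hA.ne') hω)]
    push_cast at h
    linear_combination h / 2
  · intro k j hk1 hk3
    by_cases hk0 : k = 0
    · rw [hk0]; exact hc0 j
    · have h := main j k hk0
      rw [if_neg hk1, if_neg hk3] at h
      have hfac : 2 * enormFin (u j) * ((ω j)^2 - (k:ℝ)^2 * (ω i1)^2) ≠ 0 := by
        apply mul_ne_zero
        apply mul_ne_zero two_ne_zero (enormFin_pos _ (hune j)).ne'
        exact sub_ne_zero.mpr (hres k (by omega) j)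
      have h2 : c k j * (2 * enormFin (u j) * ((ω j)^2 - (k:ℝ)^2 * (ω i1)^2)) = 0 := by
        linear_combination h
      exact (mul_eq_zero.mp h2).resolve_right hfac
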